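/- Let 𝔄 be a model, S = {t_a : a ∈ A} a set of closed terms where each t_a denotes a in 𝔄, and T a theory such that every sentence provable from T (in ordinary first-order logic) is true in 𝔄, and such that for every atomic or negated atomic formula φ and substitution φ̄ of terms from S for all its free variables, T ⊢ φ̄ iff 𝔄 ⊨ φ̄. Then for all sentences σ, T ⊢_S σ iff 𝔄 ⊨ σ; that is, the closure of T under first-order provability plus the S-rule is exactly the complete theory Th(𝔄). -/

import Mathlib

open FirstOrder FirstOrder.Language Cardinal Set

universe u v w w2

/-- The universal closure `∀x φ(x)` of a formula in one free variable. -/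
noncomputable def allClose {L : Language} (φ : L.Formula Unit) : L.Sentence :=
  let e := Classical.choice (Classical.choose_spec (Finite.exists_equiv_fin Unit))
  (BoundedFormula.relabel (fun (a : Unit) => Sum.map id e
    ((fun _ : Unit => (Sum.inr () : Empty ⊕ Unit)) a)) φ).alls

/-- The existential closure `∃x φ(x)` of a formula in one free variable. -/
noncomputable def exClose {L : Language} (φ : L.Formula Unit) : L.Sentence :=
  let e := Classical.choice (Classical.choose_spec (Finite.exists_equiv_fin Unit))
  (BoundedFormula.relabel (fun (a : Unit) => Sum.map id e
    ((fun _ : Unit => (Sum.inr () : Empty ⊕ Unit)) a)) φ).exs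

/-- Substitution of a closed term for the unique free variable. -/
noncomputable def substC {L : Language} (φ : L.Formula Unit) (t : L.Term Empty) : L.Sentence :=
  φ.subst (fun _ => t)


/-- Provability generated by first-order provability (rendered, by Gödel completeness, as
semantic consequence `⊨ᵇ`) together with the `S`-rule. -/
inductive SProv (L : Language) (S : Set (L.Term Empty)) (T : L.Theory) : L.Sentence → Prop
  | ax {σ} (h : σ ∈ T) : SProv L S T σ
  | fo (T' : L.Theory) (h : ∀ σ ∈ T', SProv L S T σ) {σ} (hσ : T' ⊨ᵇ σ) : SProv L S T σ
  | srule (φ : L.Formula Unit) (h : ∀ t ∈ S, SProv L S T (substC φ t)) :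
      SProv L S T (allClose φ)


section Helpers
variable {L : FirstOrder.Language.{u, v}}

/-- substitute the `Fin k` free variables of `φ.toFormula` by closed terms `g`. -/
noncomputable def subF {k : ℕ} (φ : L.BoundedFormula Empty k) (g : Fin k → L.Term Empty) :
    L.Sentence :=
  φ.toFormula.subst (Sum.elim (fun e => e.elim) g)

theorem realize_subF {N : Type w2} [L.Structure N] {k : ℕ} (φ : L.BoundedFormula Empty k)
    (g : Fin k → L.Term Empty) :
    N ⊨ subF φ g ↔ φ.Realize (default : Empty → N)
      (fun i => Term.realize (default : Empty → N) (g i)) := by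
  have h0 : (N ⊨ subF φ g) ↔ BoundedFormula.Realize
      (φ.toFormula.subst (Sum.elim (fun e => e.elim) g))
      (default : Empty → N) (default : Fin 0 → N) := Iff.rfl
  rw [h0, BoundedFormula.realize_subst]
  refine Iff.trans (BoundedFormula.realize_toFormula φ _) ?_
  have e1 : ((fun a => Term.realize (default : Empty → N)
      (Sum.elim (fun e : Empty => e.elim) g a)) ∘ Sum.inl) = (default : Empty → N) :=
    Subsingleton.elim _ _
  have e2 : ((fun a => Term.realize (default : Empty → N)
      (Sum.elim (fun e : Empty => e.elim) g a)) ∘ Sum.inr) =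
      fun i => Term.realize (default : Empty → N) (g i) := rfl
  rw [e1, e2]

theorem realize_substC {N : Type w2} [L.Structure N] (φ : L.Formula Unit) (t : L.Term Empty) :
    N ⊨ substC φ t ↔ φ.Realize (fun _ : Unit => Term.realize (default : Empty → N) t) := by
  have h0 : (N ⊨ substC φ t) ↔ BoundedFormula.Realize (φ.subst fun _ => t)
      (default : Empty → N) (default : Fin 0 → N) := Iff.rfl
  rw [h0, BoundedFormula.realize_subst]
  rfl

theorem realize_allClose {N : Type w2} [L.Structure N] (φ : L.Formula Unit) :
    N ⊨ allClose φ ↔ ∀ x : N, φ.Realize (fun _ : Unit => x) := by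
  show Formula.Realize _ (default : Empty → N) ↔ _
  simp only [allClose, Nat.add_zero, BoundedFormula.realize_alls, BoundedFormula.realize_relabel,
    Function.comp_def]
  constructor
  · intro h x
    have := h (fun _ => x)
    rw [Formula.Realize]
    convert this using 2
    rfl
  · intro h xs
    have := h (xs ((Classical.choice (Classical.choose_spec (Finite.exists_equiv_fin Unit))) ()))
    rw [Formula.Realize] at this
    convert this using 2
    rfl

/-- Formula-level realize-subst. -/
theorem realize_substF {N : Type w2} [L.Structure N] {α β : Type*} (φ : L.Formula α)
    (f : α → L.Term β) (v : β → N) :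
    Formula.Realize (φ.subst f : L.Formula β) v ↔ Formula.Realize φ (fun a => (f a).realize v) :=
  BoundedFormula.realize_subst

theorem SProv.one {S : Set (L.Term Empty)} {T : L.Theory} {σ τ : L.Sentence}
    (h : SProv L S T σ)
    (he : ∀ (N : Type (max u v)) [L.Structure N] [Nonempty N], N ⊨ σ → N ⊨ τ) :
    SProv L S T τ :=
  SProv.fo {σ} (fun ρ hρ => Set.mem_singleton_iff.1 hρ ▸ h)
    (Theory.models_sentence_iff.2 fun N =>
      he N (Theory.realize_sentence_of_mem {σ} (Set.mem_singleton σ)))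

theorem SProv.two {S : Set (L.Term Empty)} {T : L.Theory} {σ₁ σ₂ τ : L.Sentence}
    (h1 : SProv L S T σ₁) (h2 : SProv L S T σ₂)
    (he : ∀ (N : Type (max u v)) [L.Structure N] [Nonempty N], N ⊨ σ₁ → N ⊨ σ₂ → N ⊨ τ) :
    SProv L S T τ :=
  SProv.fo {σ₁, σ₂} (fun ρ hρ => by rcases hρ with h | h <;> subst h <;> assumption)
    (Theory.models_sentence_iff.2 fun N =>
      he N (Theory.realize_sentence_of_mem {σ₁, σ₂} (by simp))
        (Theory.realize_sentence_of_mem {σ₁, σ₂} (by simp)))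

theorem SProv.valid {S : Set (L.Term Empty)} {T : L.Theory} {τ : L.Sentence}
    (he : ∀ (N : Type (max u v)) [L.Structure N] [Nonempty N], N ⊨ τ) :
    SProv L S T τ :=
  SProv.fo ∅ (fun _ h => absurd h (Set.notMem_empty _))
    (Theory.models_sentence_iff.2 fun N => he N)

end Helpers

section Atomic
variable {L : FirstOrder.Language.{u, v}}

theorem realize_subF_equal {N : Type w2} [L.Structure N] {k : ℕ}
    (t₁ t₂ : L.Term (Empty ⊕ Fin k)) (g : Fin k → L.Term Empty) :
    N ⊨ BoundedFormula.subst
        (Term.equal (t₁.relabel (Sum.elim (fun e : Empty => e.elim) id))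
          (t₂.relabel (Sum.elim (fun e : Empty => e.elim) id))) g ↔
      N ⊨ subF (BoundedFormula.equal t₁ t₂) g := by
  rw [show (N ⊨ BoundedFormula.subst
        (Term.equal (t₁.relabel (Sum.elim (fun e : Empty => e.elim) id))
          (t₂.relabel (Sum.elim (fun e : Empty => e.elim) id))) g) ↔
      Formula.Realize (BoundedFormula.subst
        (Term.equal (t₁.relabel (Sum.elim (fun e : Empty => e.elim) id))
          (t₂.relabel (Sum.elim (fun e : Empty => e.elim) id))) g : L.Formula Empty)
        (default : Empty → N) from Iff.rfl]
  rw [realize_substF, Formula.realize_equal, Term.realize_relabel, Term.realize_relabel,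
    realize_subF]
  rw [show (BoundedFormula.equal t₁ t₂).Realize (default : Empty → N)
      (fun i => Term.realize (default : Empty → N) (g i)) ↔
      t₁.realize (Sum.elim (default : Empty → N)
        (fun i => Term.realize (default : Empty → N) (g i))) =
      t₂.realize (Sum.elim (default : Empty → N)
        (fun i => Term.realize (default : Empty → N) (g i))) from Iff.rfl]
  have e : ((fun a => Term.realize (default : Empty → N) (g a)) ∘
      (Sum.elim (fun e : Empty => e.elim) id : Empty ⊕ Fin k → Fin k)) =
      Sum.elim (default : Empty → N) (fun i => Term.realize (default : Empty → N) (g i)) := by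
    funext a
    rcases a with e | i
    · exact e.elim
    · rfl
  rw [e]

theorem realize_subF_rel {N : Type w2} [L.Structure N] {k l : ℕ} (R : L.Relations l)
    (ts : Fin l → L.Term (Empty ⊕ Fin k)) (g : Fin k → L.Term Empty) :
    N ⊨ BoundedFormula.subst
        (Relations.formula R (fun i => (ts i).relabel (Sum.elim (fun e : Empty => e.elim) id))) g ↔
      N ⊨ subF (BoundedFormula.rel R ts) g := by
  rw [show (N ⊨ BoundedFormula.subst
        (Relations.formula R (fun i => (ts i).relabel (Sum.elim (fun e : Empty => e.elim) id))) g) ↔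
      Formula.Realize (BoundedFormula.subst
        (Relations.formula R (fun i => (ts i).relabel (Sum.elim (fun e : Empty => e.elim) id))) g
        : L.Formula Empty) (default : Empty → N) from Iff.rfl]
  rw [realize_substF, Formula.realize_rel, realize_subF]
  rw [show (BoundedFormula.rel R ts).Realize (default : Empty → N)
      (fun i => Term.realize (default : Empty → N) (g i)) ↔
      Structure.RelMap R (fun i => (ts i).realize (Sum.elim (default : Empty → N)
        (fun i => Term.realize (default : Empty → N) (g i)))) from Iff.rfl]
  have e : ∀ i, ((ts i).relabel (Sum.elim (fun e : Empty => e.elim) id)).realize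
      (fun a => Term.realize (default : Empty → N) (g a)) =
      (ts i).realize (Sum.elim (default : Empty → N)
        (fun i => Term.realize (default : Empty → N) (g i))) := by
    intro i
    rw [Term.realize_relabel]
    congr 1
    funext a
    rcases a with e | j
    · exact e.elim
    · rfl
  exact iff_of_eq (congrArg _ (funext e))

end Atomic

section AllCase
variable {L : FirstOrder.Language.{u, v}}

/-- The one-free-variable formula `φ(t_{g 0}, …, t_{g (k-1)}, x)`. -/
noncomputable def chiF {k : ℕ} (φ : L.BoundedFormula Empty (k + 1))
    (g : Fin k → L.Term Empty) : L.Formula Unit :=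
  φ.toFormula.subst (Sum.elim (fun e : Empty => e.elim)
    (Fin.snoc (fun i => (g i).relabel (fun e : Empty => e.elim)) (Term.var ())))

theorem snoc_realize {N : Type w2} [L.Structure N] {k : ℕ} (g : Fin k → L.Term Empty)
    (t : L.Term Empty) :
    (fun i => Term.realize (default : Empty → N) ((Fin.snoc g t : Fin (k+1) → L.Term Empty) i)) =
      Fin.snoc (fun i => Term.realize (default : Empty → N) (g i))
        (Term.realize (default : Empty → N) t) := by
  funext i
  refine Fin.lastCases ?_ (fun j => ?_) i
  · simp [Fin.snoc_last]
  · simp [Fin.snoc_castSucc]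

theorem realize_chiF {N : Type w2} [L.Structure N] {k : ℕ} (φ : L.BoundedFormula Empty (k + 1))
    (g : Fin k → L.Term Empty) (x : N) :
    Formula.Realize (chiF φ g) (fun _ : Unit => x) ↔
      φ.Realize (default : Empty → N)
        (Fin.snoc (fun i => Term.realize (default : Empty → N) (g i)) x) := by
  rw [chiF, realize_substF]
  refine Iff.trans (BoundedFormula.realize_toFormula φ _) ?_
  have e1 : ((fun a => Term.realize (fun _ : Unit => x)
      ((Sum.elim (fun e : Empty => e.elim)
        (Fin.snoc (fun i => (g i).relabel (fun e : Empty => e.elim)) (Term.var ()))) a)) ∘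
      Sum.inl) = (default : Empty → N) := Subsingleton.elim _ _
  have e2 : ((fun a => Term.realize (fun _ : Unit => x)
      ((Sum.elim (fun e : Empty => e.elim)
        (Fin.snoc (fun i => (g i).relabel (fun e : Empty => e.elim)) (Term.var ()))) a)) ∘
      Sum.inr) =
      Fin.snoc (fun i => Term.realize (default : Empty → N) (g i)) x := by
    funext i
    refine Fin.lastCases ?_ (fun j => ?_) i
    · simp [Fin.snoc_last]
    · simp only [Function.comp_apply, Sum.elim_inr, Fin.snoc_castSucc, Term.realize_relabel]
      congr 1
      exact Subsingleton.elim _ _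
  rw [e1, e2]

theorem realize_substC_chiF {N : Type w2} [L.Structure N] {k : ℕ}
    (φ : L.BoundedFormula Empty (k + 1)) (g : Fin k → L.Term Empty) (t : L.Term Empty) :
    N ⊨ substC (chiF φ g) t ↔ N ⊨ subF φ (Fin.snoc g t) := by
  rw [realize_substC, realize_chiF, realize_subF, snoc_realize]

theorem realize_allClose_chiF {N : Type w2} [L.Structure N] {k : ℕ}
    (φ : L.BoundedFormula Empty (k + 1)) (g : Fin k → L.Term Empty) :
    N ⊨ allClose (chiF φ g) ↔ N ⊨ subF φ.all g := by
  rw [realize_allClose, realize_subF]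
  rw [show (φ.all.Realize (default : Empty → N)
      (fun i => Term.realize (default : Empty → N) ((g : Fin k → L.Term Empty) i))) ↔
      ∀ x : N, φ.Realize (default : Empty → N)
        (Fin.snoc (fun i => Term.realize (default : Empty → N) (g i)) x) from
    BoundedFormula.realize_all]
  exact forall_congr' fun x => realize_chiF φ g x

end AllCase

section MoreHelpers
variable {L : FirstOrder.Language.{u, v}}

theorem realize_subst_not {N : Type w2} [L.Structure N] {α : Type*} (ψ : L.Formula α)
    (g : α → L.Term Empty) :
    N ⊨ BoundedFormula.subst ψ.not g ↔ ¬ N ⊨ BoundedFormula.subst ψ g := by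
  rw [show (N ⊨ BoundedFormula.subst ψ.not g) ↔
      Formula.Realize (BoundedFormula.subst ψ.not g : L.Formula Empty) (default : Empty → N)
      from Iff.rfl]
  rw [realize_substF, Formula.realize_not]
  rw [show (N ⊨ BoundedFormula.subst ψ g) ↔
      Formula.Realize (BoundedFormula.subst ψ g : L.Formula Empty) (default : Empty → N)
      from Iff.rfl]
  rw [realize_substF]

theorem realize_subF_imp {N : Type w2} [L.Structure N] {k : ℕ}
    (φ₁ φ₂ : L.BoundedFormula Empty k) (g : Fin k → L.Term Empty) :
    N ⊨ subF (φ₁.imp φ₂) g ↔ (N ⊨ subF φ₁ g → N ⊨ subF φ₂ g) := by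
  rw [realize_subF, realize_subF, realize_subF]
  exact BoundedFormula.realize_imp

end MoreHelpers

/-- Semantic completeness: [T, ⊢_S] = Th(𝔄). -/
theorem stmt_5 {L : FirstOrder.Language.{u, v}} (M : Type w) [L.Structure M] (T : L.Theory)
    (tm : M → L.Term Empty)
    (htm : ∀ a : M, Term.realize (fun x : Empty => x.elim) (tm a) = a)
    (hsound : ∀ σ : L.Sentence, T ⊨ᵇ σ → M ⊨ σ)
    (hatom : ∀ (n : ℕ) (φ : L.Formula (Fin n)),
      (φ.IsAtomic ∨ ∃ ψ : L.Formula (Fin n), ψ.IsAtomic ∧ φ = ψ.not) →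
      ∀ f : Fin n → L.Term Empty, (∀ i, f i ∈ Set.range tm) →
        (T ⊨ᵇ φ.subst f ↔ M ⊨ φ.subst f)) :
    ∀ σ : L.Sentence, SProv L (Set.range tm) T σ ↔ M ⊨ σ := by
  classical
  have hne : Nonempty M := by
    have h1 : T ⊨ᵇ (∃' ⊤ : L.Sentence) := Theory.models_sentence_iff.2 (fun N => by
      obtain ⟨x⟩ := (inferInstance : Nonempty N)
      exact (show ((N : Type _) ⊨ (∃' ⊤ : L.Sentence)) ↔
          ∃ y : N, (⊤ : L.BoundedFormula Empty 1).Realize default (Fin.snoc default y) from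
        BoundedFormula.realize_ex).2 ⟨x, by simp⟩)
    have h2 := hsound _ h1
    obtain ⟨x, -⟩ := (show (M ⊨ (∃' ⊤ : L.Sentence)) ↔
        ∃ y : M, (⊤ : L.BoundedFormula Empty 1).Realize default (Fin.snoc default y) from
      BoundedFormula.realize_ex).1 h2
    exact ⟨x⟩
  have htm' : ∀ a : M, Term.realize (default : Empty → M) (tm a) = a := fun a => by
    rw [Subsingleton.elim (default : Empty → M) (fun x : Empty => x.elim)]
    exact htm a
  have key : ∀ (k : ℕ) (φ : L.BoundedFormula Empty k) (g : Fin k → L.Term Empty),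
      (∀ i, g i ∈ Set.range tm) →
      ((M ⊨ subF φ g → SProv L (Set.range tm) T (subF φ g)) ∧
       (¬ M ⊨ subF φ g → SProv L (Set.range tm) T (subF φ g).not)) := by
    intro k φ
    induction φ with
    | @falsum k =>
      intro g hg
      constructor
      · intro h
        exact (((realize_subF BoundedFormula.falsum g).1 h : False)).elim
      · intro _
        refine SProv.valid (fun N _ _ => ?_)
        exact (Sentence.realize_not _).2 (fun hc => ((realize_subF BoundedFormula.falsum g).1 hc : False))
    | @equal k t₁ t₂ =>
      intro g hg
      have hat : (Term.equal (t₁.relabel (Sum.elim (fun e : Empty => e.elim) id))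
          (t₂.relabel (Sum.elim (fun e : Empty => e.elim) id)) : L.Formula (Fin k)).IsAtomic :=
        BoundedFormula.IsAtomic.equal _ _
      set ψ : L.Formula (Fin k) := Term.equal (t₁.relabel (Sum.elim (fun e : Empty => e.elim) id))
        (t₂.relabel (Sum.elim (fun e : Empty => e.elim) id)) with hψdef
      constructor
      · intro h
        have h1 : M ⊨ BoundedFormula.subst ψ g := (realize_subF_equal t₁ t₂ g).2 h
        have h2 : T ⊨ᵇ BoundedFormula.subst ψ g := (hatom k ψ (Or.inl hat) g hg).2 h1
        have h3 : SProv L (Set.range tm) T (BoundedFormula.subst ψ g) :=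
          SProv.fo T (fun _ hρ => SProv.ax hρ) h2
        exact SProv.one h3 (fun N _ _ hN => (realize_subF_equal t₁ t₂ g).1 hN)
      · intro h
        have h1 : M ⊨ BoundedFormula.subst ψ.not g :=
          (realize_subst_not ψ g).2 (fun hc => h ((realize_subF_equal t₁ t₂ g).1 hc))
        have h2 : T ⊨ᵇ BoundedFormula.subst ψ.not g :=
          (hatom k ψ.not (Or.inr ⟨ψ, hat, rfl⟩) g hg).2 h1
        have h3 : SProv L (Set.range tm) T (BoundedFormula.subst ψ.not g) :=
          SProv.fo T (fun _ hρ => SProv.ax hρ) h2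
        refine SProv.one h3 (fun N _ _ hN => ?_)
        exact (Sentence.realize_not _).2
          (fun hc => (realize_subst_not ψ g).1 hN ((realize_subF_equal t₁ t₂ g).2 hc))
    | @rel k l R ts =>
      intro g hg
      have hat : (Relations.formula R
          (fun i => (ts i).relabel (Sum.elim (fun e : Empty => e.elim) id)) :
          L.Formula (Fin k)).IsAtomic := BoundedFormula.IsAtomic.rel _ _
      set ψ : L.Formula (Fin k) := Relations.formula R
        (fun i => (ts i).relabel (Sum.elim (fun e : Empty => e.elim) id)) with hψdef
      constructor
      · intro h
        have h1 : M ⊨ BoundedFormula.subst ψ g := (realize_subF_rel R ts g).2 h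
        have h2 : T ⊨ᵇ BoundedFormula.subst ψ g := (hatom k ψ (Or.inl hat) g hg).2 h1
        have h3 : SProv L (Set.range tm) T (BoundedFormula.subst ψ g) :=
          SProv.fo T (fun _ hρ => SProv.ax hρ) h2
        exact SProv.one h3 (fun N _ _ hN => (realize_subF_rel R ts g).1 hN)
      · intro h
        have h1 : M ⊨ BoundedFormula.subst ψ.not g :=
          (realize_subst_not ψ g).2 (fun hc => h ((realize_subF_rel R ts g).1 hc))
        have h2 : T ⊨ᵇ BoundedFormula.subst ψ.not g :=
          (hatom k ψ.not (Or.inr ⟨ψ, hat, rfl⟩) g hg).2 h1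
        have h3 : SProv L (Set.range tm) T (BoundedFormula.subst ψ.not g) :=
          SProv.fo T (fun _ hρ => SProv.ax hρ) h2
        refine SProv.one h3 (fun N _ _ hN => ?_)
        exact (Sentence.realize_not _).2
          (fun hc => (realize_subst_not ψ g).1 hN ((realize_subF_rel R ts g).2 hc))
    | @imp k φ₁ φ₂ ih₁ ih₂ =>
      intro g hg
      constructor
      · intro h
        by_cases hc : M ⊨ subF φ₁ g
        · have h2 := (ih₂ g hg).1 ((realize_subF_imp φ₁ φ₂ g).1 h hc)
          exact SProv.one h2 (fun N _ _ hN => (realize_subF_imp φ₁ φ₂ g).2 (fun _ => hN))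
        · have h1 := (ih₁ g hg).2 hc
          exact SProv.one h1 (fun N _ _ hN => (realize_subF_imp φ₁ φ₂ g).2
            (fun hx => absurd hx ((Sentence.realize_not _).1 hN)))
      · intro h
        rw [realize_subF_imp] at h
        push_neg at h
        obtain ⟨ha, hb⟩ := h
        exact SProv.two ((ih₁ g hg).1 ha) ((ih₂ g hg).2 hb) (fun N _ _ h1 h2 =>
          (Sentence.realize_not _).2 (fun hcon =>
            (Sentence.realize_not _).1 h2 ((realize_subF_imp φ₁ φ₂ g).1 hcon h1)))
    | @all k φ ih =>
      intro g hg
      have hgsnoc : ∀ a : M, ∀ i, (Fin.snoc g (tm a) : Fin _ → L.Term Empty) i ∈ Set.range tm := by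
        intro a i
        refine Fin.lastCases ?_ (fun j => ?_) i
        · rw [Fin.snoc_last]; exact ⟨a, rfl⟩
        · rw [Fin.snoc_castSucc]; exact hg j
      constructor
      · intro h
        have hforall : ∀ x : M, φ.Realize (default : Empty → M)
            (Fin.snoc (fun i => Term.realize (default : Empty → M) (g i)) x) := by
          rw [realize_subF] at h
          exact fun x => BoundedFormula.realize_all.1 h x
        refine SProv.one (SProv.srule (chiF φ g) ?_)
          (fun N _ _ hN => (realize_allClose_chiF φ g).1 hN)
        rintro t ⟨a, rfl⟩
        have hMa : M ⊨ subF φ (Fin.snoc g (tm a)) := by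
          rw [realize_subF, snoc_realize, htm' a]
          exact hforall a
        exact SProv.one ((ih (Fin.snoc g (tm a)) (hgsnoc a)).1 hMa)
          (fun N _ _ hN => (realize_substC_chiF φ g (tm a)).2 hN)
      · intro h
        rw [realize_subF] at h
        have h2 : ¬ ∀ x : M, φ.Realize (default : Empty → M)
            (Fin.snoc (fun i => Term.realize (default : Empty → M) (g i)) x) :=
          fun hc => h (BoundedFormula.realize_all.2 hc)
        push_neg at h2
        obtain ⟨a, ha⟩ := h2
        have hMa : ¬ M ⊨ subF φ (Fin.snoc g (tm a)) := by
          rw [realize_subF, snoc_realize, htm' a]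
          exact ha
        refine SProv.one ((ih (Fin.snoc g (tm a)) (hgsnoc a)).2 hMa) (fun N _ _ hN => ?_)
        refine (Sentence.realize_not _).2 (fun hcon => ?_)
        refine (Sentence.realize_not _).1 hN ?_
        rw [realize_subF] at hcon ⊢
        rw [snoc_realize]
        exact BoundedFormula.realize_all.1 hcon _
  intro σ
  constructor
  · intro hp
    induction hp with
    | ax h => exact hsound _ (Theory.models_sentence_of_mem h)
    | fo T' h hσ ih =>
      haveI : Nonempty M := hne
      haveI : M ⊨ T' := T'.model_iff.2 ih
      exact hσ.realize_sentence M
    | srule φu hs ih =>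
      rw [realize_allClose]
      intro x
      have hx := ih (tm x) ⟨x, rfl⟩
      rw [realize_substC, htm' x] at hx
      exact hx
  · intro h
    have h0 : M ⊨ subF σ (fun i => i.elim0) := by
      refine (realize_subF σ _).2 ?_
      have h' : BoundedFormula.Realize σ (default : Empty → M) (default : Fin 0 → M) := h
      convert h' using 2
    have h1 := (key 0 σ (fun i => i.elim0) (fun i => i.elim0)).1 h0
    refine SProv.one h1 (fun N _ _ hN => ?_)
    have hN' := (realize_subF σ _).1 hN
    show BoundedFormula.Realize σ (default : Empty → N) (default : Fin 0 → N)
    convert hN' using 2
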